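/- arXiv:2204.06446 — 2 statements merged into one kernel-verified Lean document; each statement's English description precedes it below -/
import Mathlib

section
/- Let p ≥ 1, let α ≥ 0, and let λ ∈ ℝ^p satisfy λ_1 ≥ λ_2 ≥ ... ≥ λ_p ≥ 0. Then the (α,λ)-fair operator F_{α,λ} is a concave function on the open positive orthant {W ∈ ℝ^p : W_j > 0 for all j}. -/
open Set Finset

/-- The `(α,λ)`-fair operator on the positive orthant of `ℝ^p`:
`F (W) = (1/(1-α)) ∑ j, l j * W_(j)^(1-α)` if `α ≠ 1`, and
`F (W) = ∑ j, l j * log (W_(j))` if `α = 1`, where `W_(0) ≤ ... ≤ W_(p-1)` is the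
nondecreasing rearrangement of `W` (via the sorting permutation `Tuple.sort W`). -/
noncomputable def fairOp {p : ℕ} (α : ℝ) (l : Fin p → ℝ) (W : Fin p → ℝ) : ℝ :=
  if α = 1 then ∑ j : Fin p, l j * Real.log (W (Tuple.sort W j))
  else (1 / (1 - α)) * ∑ j : Fin p, l j * W (Tuple.sort W j) ^ (1 - α)

/-- Auxiliary: the scalar fair utility `φ_α`. -/
noncomputable def fairPhi (α : ℝ) (x : ℝ) : ℝ :=
  if α = 1 then Real.log x else (1 / (1 - α)) * x ^ (1 - α)

lemma convexOn_rpow_nonpos {q : ℝ} (hq : q ≤ 0) :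
    ConvexOn ℝ (Set.Ioi (0:ℝ)) fun x : ℝ => x ^ q := by
  have hint : interior (Set.Ioi (0:ℝ)) = Set.Ioi 0 := interior_Ioi
  have hderiv : ∀ x ∈ Set.Ioi (0:ℝ),
      deriv (fun x : ℝ => x ^ q) x = q * x ^ (q - 1) := fun x hx =>
    Real.deriv_rpow_const x q
  have hg : DifferentiableOn ℝ (fun x : ℝ => q * x ^ (q - 1)) (Set.Ioi 0) := fun x hx =>
    ((Real.hasDerivAt_rpow_const (p := q - 1)
      (Or.inl (ne_of_gt hx))).differentiableAt.const_mul q).differentiableWithinAt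
  apply convexOn_of_deriv2_nonneg (convex_Ioi 0)
  · intro x hx
    exact (Real.continuousAt_rpow_const x q (Or.inl (ne_of_gt hx))).continuousWithinAt
  · rw [hint]
    intro x hx
    exact (Real.hasDerivAt_rpow_const
      (Or.inl (ne_of_gt hx))).differentiableAt.differentiableWithinAt
  · rw [hint]
    exact hg.congr hderiv
  · rw [hint]
    intro x hx
    have heq : deriv (deriv fun x : ℝ => x ^ q) x
        = deriv (fun x : ℝ => q * x ^ (q - 1)) x := by
      apply Filter.EventuallyEq.deriv_eq
      filter_upwards [Ioi_mem_nhds hx] with y hy using hderiv y hy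
    have hd : deriv (fun x : ℝ => q * x ^ (q - 1)) x = q * ((q - 1) * x ^ (q - 1 - 1)) := by
      rw [deriv_const_mul _ (Real.hasDerivAt_rpow_const (p := q - 1)
        (Or.inl (ne_of_gt hx))).differentiableAt,
        Real.deriv_rpow_const x (q - 1)]
    have : deriv^[2] (fun x : ℝ => x ^ q) x = q * ((q - 1) * x ^ (q - 1 - 1)) := by
      simp only [Function.iterate_succ, Function.iterate_zero, Function.comp_apply, id_eq]
      rw [heq, hd]
    rw [this, ← mul_assoc]
    exact mul_nonneg ((by nlinarith : (0:ℝ) ≤ q * (q - 1)))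
      (Real.rpow_pos_of_pos hx _).le

lemma fairPhi_concaveOn {α : ℝ} (hα : 0 ≤ α) :
    ConcaveOn ℝ (Set.Ioi (0:ℝ)) (fairPhi α) := by
  rcases eq_or_ne α 1 with rfl | hne
  · have : fairPhi 1 = Real.log := by funext x; simp [fairPhi]
    rw [this]
    exact strictConcaveOn_log_Ioi.concaveOn
  rcases lt_or_gt_of_ne hne with hlt | hgt
  · -- α < 1 : exponent q = 1 - α ∈ (0, 1]
    have hq0 : (0:ℝ) < 1 - α := by linarith
    have hq1 : 1 - α ≤ 1 := by linarith
    have hc : (0:ℝ) ≤ 1 / (1 - α) := by positivity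
    have h := ((Real.concaveOn_rpow hq0.le hq1).subset Ioi_subset_Ici_self
      (convex_Ioi 0)).smul hc
    have : fairPhi α = (1 / (1 - α)) • fun x : ℝ => x ^ (1 - α) := by
      funext x; simp [fairPhi, hne, smul_eq_mul]
    rw [this]; exact h
  · -- α > 1 : exponent q = 1 - α < 0
    have hq : 1 - α ≤ 0 := by linarith
    have hc : (0:ℝ) ≤ -(1 / (1 - α)) := by
      rw [neg_nonneg]
      apply div_nonpos_of_nonneg_of_nonpos <;> linarith
    have h := ((convexOn_rpow_nonpos hq).smul hc).neg
    have : fairPhi α = -((-(1 / (1 - α))) • fun x : ℝ => x ^ (1 - α)) := by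
      funext x; simp only [fairPhi, hne, if_false, Pi.neg_apply, Pi.smul_apply, smul_eq_mul]; ring
    rw [this]; exact h

lemma fairPhi_mono {α : ℝ} {x y : ℝ} (hx : 0 < x) (hxy : x ≤ y) :
    fairPhi α x ≤ fairPhi α y := by
  unfold fairPhi
  split_ifs with h
  · exact Real.log_le_log hx hxy
  rcases lt_or_gt_of_ne (fun hc : α = 1 => h hc) with hlt | hgt
  · have hq : (0:ℝ) ≤ 1 - α := by linarith
    exact mul_le_mul_of_nonneg_left (Real.rpow_le_rpow hx.le hxy hq) (by positivity)
  · have hq : 1 - α ≤ 0 := by linarith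
    have hc : 1 / (1 - α) ≤ 0 := by
      apply div_nonpos_of_nonneg_of_nonpos <;> linarith
    exact mul_le_mul_of_nonpos_left (Real.rpow_le_rpow_of_nonpos hx hxy hq) hc

lemma fairOp_eq_sum_phi {p : ℕ} (α : ℝ) (l : Fin p → ℝ) (W : Fin p → ℝ) :
    fairOp α l W = ∑ j : Fin p, l j * fairPhi α (W (Tuple.sort W j)) := by
  unfold fairOp fairPhi
  split_ifs with h
  · rfl
  · rw [Finset.mul_sum]
    exact Finset.sum_congr rfl fun j _ => by ring

/-- Rearrangement: the sorted pairing minimizes the weighted sum. -/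
lemma fairOp_le_perm {p : ℕ} {α : ℝ} {l : Fin p → ℝ} (hmono : Antitone l)
    {W : Fin p → ℝ} (hW : ∀ j, 0 < W j) (τ : Equiv.Perm (Fin p)) :
    ∑ j : Fin p, l j * fairPhi α (W (Tuple.sort W j))
      ≤ ∑ j : Fin p, l j * fairPhi α (W (τ j)) := by
  set g : Fin p → ℝ := fun j => fairPhi α (W (Tuple.sort W j)) with hg_def
  have hg : Monotone g := fun i j hij =>
    fairPhi_mono (hW _) (Tuple.monotone_sort W hij)
  have hanti : Antivary l g := by
    intro i j hij
    apply hmono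
    by_contra hc
    push_neg at hc
    exact absurd (hg hc.le) (not_le.mpr hij)
  have key := hanti.sum_smul_le_sum_smul_comp_perm (σ := (Tuple.sort W)⁻¹ * τ)
  simp only [smul_eq_mul] at key
  refine key.trans_eq (Finset.sum_congr rfl fun j _ => ?_)
  congr 2
  simp [hg_def, Equiv.Perm.mul_apply]

/-- for `α ≥ 0` and a nonincreasing nonnegative weight vector `l`,
the `(α,λ)`-fair operator is concave on the open positive orthant. -/
theorem fairOp_concaveOn {p : ℕ} (hp : 1 ≤ p) (α : ℝ) (hα : 0 ≤ α)
    (l : Fin p → ℝ) (hmono : Antitone l) (hnonneg : ∀ j, 0 ≤ l j) :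
    ConcaveOn ℝ {W : Fin p → ℝ | ∀ j, 0 < W j} (fairOp α l) := by
  have hsconv : Convex ℝ {W : Fin p → ℝ | ∀ j, 0 < W j} := by
    have : {W : Fin p → ℝ | ∀ j, 0 < W j}
        = Set.pi Set.univ (fun _ : Fin p => Set.Ioi (0:ℝ)) := by
      ext W; simp [Set.mem_pi]
    rw [this]
    exact convex_pi fun _ _ => convex_Ioi 0
  refine ⟨hsconv, ?_⟩
  intro W hW V hV a b ha hb hab
  have hphi := fairPhi_concaveOn hα
  set U : Fin p → ℝ := a • W + b • V with hU_def
  have hU : ∀ j, 0 < U j := by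
    intro j
    have hWj := hW j; have hVj := hV j
    simp only [hU_def, Pi.add_apply, Pi.smul_apply, smul_eq_mul]
    rcases ha.eq_or_lt with rfl | ha'
    · simp only [zero_mul, zero_add]
      have : b = 1 := by linarith
      nlinarith
    · nlinarith [mul_nonneg hb hVj.le]
  set τ := Tuple.sort U with hτ
  have step1 : ∀ j : Fin p,
      l j * (a * fairPhi α (W (τ j)) + b * fairPhi α (V (τ j)))
        ≤ l j * fairPhi α (U (τ j)) := by
    intro j
    apply mul_le_mul_of_nonneg_left _ (hnonneg j)
    have h := hphi.2 (Set.mem_Ioi.mpr (hW (τ j))) (Set.mem_Ioi.mpr (hV (τ j))) ha hb hab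
    simpa only [smul_eq_mul, hU_def, Pi.add_apply, Pi.smul_apply] using h
  have hsum : ∑ j : Fin p, l j * (a * fairPhi α (W (τ j)) + b * fairPhi α (V (τ j)))
      ≤ ∑ j : Fin p, l j * fairPhi α (U (τ j)) :=
    Finset.sum_le_sum fun j _ => step1 j
  have hsplit : ∑ j : Fin p, l j * (a * fairPhi α (W (τ j)) + b * fairPhi α (V (τ j)))
      = a * ∑ j : Fin p, l j * fairPhi α (W (τ j))
        + b * ∑ j : Fin p, l j * fairPhi α (V (τ j)) := by
    rw [Finset.mul_sum, Finset.mul_sum, ← Finset.sum_add_distrib]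
    exact Finset.sum_congr rfl fun j _ => by ring
  have hWre := fairOp_le_perm (α := α) hmono hW τ
  have hVre := fairOp_le_perm (α := α) hmono hV τ
  have hfinal : fairOp α l U = ∑ j : Fin p, l j * fairPhi α (U (τ j)) := by
    rw [fairOp_eq_sum_phi]
  calc a • fairOp α l W + b • fairOp α l V
      ≤ a * (∑ j : Fin p, l j * fairPhi α (W (τ j)))
        + b * (∑ j : Fin p, l j * fairPhi α (V (τ j))) := by
        simp only [smul_eq_mul, fairOp_eq_sum_phi α l W, fairOp_eq_sum_phi α l V]
        exact add_le_add (mul_le_mul_of_nonneg_left hWre ha)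
          (mul_le_mul_of_nonneg_left hVre hb)
    _ = ∑ j : Fin p, l j * (a * fairPhi α (W (τ j)) + b * fairPhi α (V (τ j))) := hsplit.symm
    _ ≤ ∑ j : Fin p, l j * fairPhi α (U (τ j)) := hsum
    _ = fairOp α l (a • W + b • V) := hfinal.symm
end

section
/- Let p ≥ 2 and define the harmonic weight vector λ ∈ ℝ^p by λ_j = (1/p)(H(p) − H(j−1)) for j = 1, ..., p, where H(k) = Σ_{ℓ=1}^k 1/ℓ is the k-th harmonic number and H(0) = 0. Then Σ_{j=1}^p λ_j = 1 and orness(λ) = 3/4. -/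
/-- The orness of a weight vector `l ∈ ℝ^p`: `orness l = ∑_{j=1}^p ((p-j)/(p-1)) l_j`
(here the index `j : Fin p` is 0-based, corresponding to the 1-based index `j+1`). -/
noncomputable def orness {p : ℕ} (l : Fin p → ℝ) : ℝ :=
  ∑ j : Fin p, (((p : ℝ) - ((j : ℕ) + 1)) / ((p : ℝ) - 1)) * l j

/-- The `k`-th harmonic number `H(k) = ∑_{ℓ=1}^k 1/ℓ`, with `H(0) = 0`. -/
noncomputable def harm (k : ℕ) : ℝ := ∑ l ∈ Finset.range k, 1 / ((l : ℝ) + 1)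

lemma harm_succ (k : ℕ) : harm (k + 1) = harm k + 1 / ((k : ℝ) + 1) := by
  simp [harm, Finset.sum_range_succ]

lemma sum_harm (n : ℕ) : ∑ j ∈ Finset.range n, harm j = n * harm n - n := by
  induction n with
  | zero => simp
  | succ n ih =>
    have h : ((n : ℝ) + 1) ≠ 0 := by positivity
    rw [Finset.sum_range_succ, ih, harm_succ]
    push_cast
    field_simp
    ring

lemma sum_mul_harm (n : ℕ) :
    ∑ j ∈ Finset.range n, (j : ℝ) * harm j
      = harm n * ((n : ℝ) * ((n : ℝ) - 1) / 2) - (n : ℝ) * ((n : ℝ) - 1) / 4 := by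
  induction n with
  | zero => simp
  | succ n ih =>
    have h : ((n : ℝ) + 1) ≠ 0 := by positivity
    rw [Finset.sum_range_succ, ih, harm_succ]
    push_cast
    field_simp
    ring

lemma sum_id_real (n : ℕ) : ∑ j ∈ Finset.range n, (j : ℝ) = (n : ℝ) * ((n : ℝ) - 1) / 2 := by
  induction n with
  | zero => simp
  | succ n ih =>
    rw [Finset.sum_range_succ, ih]
    push_cast
    ring

lemma key_sum (p : ℕ) :
    ∑ j ∈ Finset.range p, ((p : ℝ) - ((j : ℕ) + 1)) * (harm p - harm j)
      = 3 / 4 * (p : ℝ) * ((p : ℝ) - 1) := by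
  calc ∑ j ∈ Finset.range p, ((p : ℝ) - ((j : ℕ) + 1)) * (harm p - harm j)
      = ∑ j ∈ Finset.range p,
        ((((p : ℝ) - 1) * harm p - harm p * (j : ℝ)) - ((p : ℝ) - 1) * harm j
          + (j : ℝ) * harm j) := by
        apply Finset.sum_congr rfl; intro j _; ring
    _ = ((p : ℝ) * (((p : ℝ) - 1) * harm p) - harm p * ∑ j ∈ Finset.range p, (j : ℝ))
          - ((p : ℝ) - 1) * ∑ j ∈ Finset.range p, harm j
          + ∑ j ∈ Finset.range p, (j : ℝ) * harm j := by
        rw [Finset.sum_add_distrib, Finset.sum_sub_distrib, Finset.sum_sub_distrib,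
          Finset.sum_const, Finset.card_range, ← Finset.mul_sum, ← Finset.mul_sum]
        ring
    _ = 3 / 4 * (p : ℝ) * ((p : ℝ) - 1) := by
        rw [sum_harm, sum_mul_harm, sum_id_real]; ring

/-- the harmonic weight vector `λ_j = (1/p)(H(p) - H(j-1))` (1-based
indexing) sums to `1` and has orness `3/4`. -/
theorem orness_harmonic {p : ℕ} (hp : 2 ≤ p) :
    (∑ j : Fin p, (1 / (p : ℝ)) * (harm p - harm (j : ℕ)) = 1) ∧
    orness (fun j : Fin p => (1 / (p : ℝ)) * (harm p - harm (j : ℕ))) = 3 / 4 := by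
  have hp0 : (p : ℝ) ≠ 0 := by positivity
  have hp1 : (p : ℝ) - 1 ≠ 0 := by
    have : (2 : ℝ) ≤ (p : ℝ) := by exact_mod_cast hp
    linarith
  constructor
  · rw [Fin.sum_univ_eq_sum_range (fun j => (1 / (p : ℝ)) * (harm p - harm j))]
    rw [← Finset.mul_sum, Finset.sum_sub_distrib, Finset.sum_const, Finset.card_range,
      sum_harm]
    field_simp
    rw [nsmul_eq_mul]; ring
  · unfold orness
    rw [Fin.sum_univ_eq_sum_range
      (fun j => (((p : ℝ) - ((j : ℕ) + 1)) / ((p : ℝ) - 1)) *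
        ((1 / (p : ℝ)) * (harm p - harm j)))]
    have : ∀ j ∈ Finset.range p,
        (((p : ℝ) - ((j : ℕ) + 1)) / ((p : ℝ) - 1)) *
          ((1 / (p : ℝ)) * (harm p - harm j))
        = (1 / (((p : ℝ) - 1) * (p : ℝ))) *
          (((p : ℝ) - ((j : ℕ) + 1)) * (harm p - harm j)) := by
      intro j _
      field_simp
    rw [Finset.sum_congr rfl this, ← Finset.mul_sum, key_sum]
    field_simp
end
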